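/- arXiv:0710.3857 — 6 statements merged into one kernel-verified Lean document; each statement's English description precedes it below -/
import Mathlib

section
/- Let n ≥ 2 and -1 < w < 1/(n-1). Let v_1,…,v_n be the unit vectors with pairwise inner product -w constructed with entries a and b as above. Then the n×n matrix whose i-th row is v_1 + v_2 + ⋯ + v_i has determinant equal to ±(1+w)^{(n-1)/2} · (1-w(n-1))^{1/2}, so the simplex Q_n(w) spanned by 0 and these partial sums has volume (1+w)^{(n-1)/2}(1-w(n-1))^{1/2}/n!. -/
open MeasureTheory Matrix Finset
open scoped ENNReal

noncomputable section

variable {n : ℕ}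

def ordSet (n : ℕ) : Set (Fin n → ℝ) :=
  {x | Antitone x} ∩ Set.pi Set.univ fun _ => Set.Icc (0:ℝ) 1

lemma isClosed_ordSet : IsClosed (ordSet n) := by
  apply IsClosed.inter
  · have : {x : Fin n → ℝ | Antitone x} =
        ⋂ (i) (j) (_ : i ≤ j), {x : Fin n → ℝ | x j ≤ x i} := by
      ext x
      simp [Antitone, Set.mem_iInter]
    rw [this]
    exact isClosed_iInter fun i => isClosed_iInter fun j => isClosed_iInter fun _ =>
      isClosed_le (continuous_apply j) (continuous_apply i)
  · exact isClosed_set_pi fun i _ => isClosed_Icc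

lemma null_diag (i j : Fin n) (hij : i ≠ j) :
    volume {x : Fin n → ℝ | x i = x j} = 0 := by
  have : {x : Fin n → ℝ | x i = x j} =
      (LinearMap.ker ((LinearMap.proj i : (Fin n → ℝ) →ₗ[ℝ] ℝ) - LinearMap.proj j) :
        Submodule ℝ (Fin n → ℝ)) := by
    ext x
    simp [LinearMap.mem_ker, sub_eq_zero]
  rw [this]
  apply MeasureTheory.Measure.addHaar_submodule
  intro htop
  have h1 : (Pi.single i 1 : Fin n → ℝ) ∈
      LinearMap.ker ((LinearMap.proj i : (Fin n → ℝ) →ₗ[ℝ] ℝ) - LinearMap.proj j) := by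
    rw [htop]; trivial
  simp [LinearMap.mem_ker, Pi.single_apply, hij, hij.symm] at h1

lemma volume_ordSet (n : ℕ) :
    volume (ordSet n) = ((n.factorial : ℝ≥0∞))⁻¹ := by
  classical
  set R : Equiv.Perm (Fin n) → Set (Fin n → ℝ) := fun σ =>
    (MeasurableEquiv.piCongrLeft (fun _ : Fin n => ℝ) σ) ⁻¹' ordSet n with hR
  have hmp : ∀ σ : Equiv.Perm (Fin n),
      MeasurePreserving (MeasurableEquiv.piCongrLeft (fun _ : Fin n => ℝ) σ) volume volume :=
    fun σ => volume_measurePreserving_piCongrLeft _ σ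
  have happ : ∀ (σ : Equiv.Perm (Fin n)) (x : Fin n → ℝ),
      (MeasurableEquiv.piCongrLeft (fun _ : Fin n => ℝ) σ) x = x ∘ σ.symm := by
    intro σ x
    ext b
    rw [MeasurableEquiv.coe_piCongrLeft, Equiv.piCongrLeft_apply]
    simp
  -- description of R σ
  have hRdesc : ∀ σ, R σ = {x : Fin n → ℝ | Antitone (x ∘ ⇑σ.symm)} ∩
      Set.pi Set.univ fun _ => Set.Icc (0:ℝ) 1 := by
    intro σ
    ext x
    simp only [hR, Set.mem_preimage, ordSet, Set.mem_inter_iff, happ, Set.mem_setOf_eq]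
    refine and_congr Iff.rfl ?_
    constructor
    · intro h i _
      have := h (σ i) (Set.mem_univ _)
      simpa using this
    · intro h i _
      exact h (σ.symm i) (Set.mem_univ _)
  -- each has the same volume
  have hvol : ∀ σ, volume (R σ) = volume (ordSet n) :=
    fun σ => (hmp σ).measure_preimage
      (isClosed_ordSet.measurableSet.nullMeasurableSet)
  -- union is the cube
  have hcover : (⋃ σ : Equiv.Perm (Fin n), R σ) =
      Set.pi Set.univ fun _ : Fin n => Set.Icc (0:ℝ) 1 := by
    apply Set.Subset.antisymm
    · refine Set.iUnion_subset fun σ => ?_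
      rw [hRdesc]; exact Set.inter_subset_right
    · intro x hx
      -- sort x descending
      set τ := Tuple.sort x with hτ
      have hmono : Monotone (x ∘ τ) := Tuple.monotone_sort x
      refine Set.mem_iUnion.2 ⟨(Fin.revPerm.trans τ).symm, ?_⟩
      rw [hRdesc]
      refine ⟨?_, hx⟩
      have : x ∘ ⇑(Fin.revPerm.trans τ) = (x ∘ τ) ∘ ⇑Fin.revPerm := rfl
      simp only [Equiv.symm_symm, this]
      intro i j hij
      exact hmono (by simpa using Fin.rev_le_rev.2 hij)
  -- a.e. disjointness
  have hdisj : Pairwise (Function.onFun (MeasureTheory.AEDisjoint volume) R) := by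
    intro σ τ hst
    have hsub : R σ ∩ R τ ⊆ ⋃ (i) (j) (_ : i ≠ j), {x : Fin n → ℝ | x i = x j} := by
      intro x hx
      by_contra hN
      simp only [Set.mem_iUnion, not_exists, Set.mem_setOf_eq] at hN
      have hinj : Function.Injective x := by
        intro i j hij
        by_contra hne
        exact hN i j hne hij
      rw [hRdesc σ, hRdesc τ] at hx
      obtain ⟨⟨h1, _⟩, ⟨h2, _⟩⟩ := hx
      have key : ∀ ρ : Equiv.Perm (Fin n), Antitone (x ∘ ⇑ρ) → StrictAnti (x ∘ ⇑ρ) := by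
        intro ρ hρ
        intro i j hij
        rcases lt_or_eq_of_le (hρ hij.le) with h | h
        · exact h
        · exact absurd (ρ.injective (hinj h.symm)) hij.ne
      have hs1 := key _ h1
      have hs2 := key _ h2
      have hr : Set.range (x ∘ ⇑σ.symm) = Set.range (x ∘ ⇑τ.symm) := by
        rw [Set.range_comp, Set.range_comp, Equiv.range_eq_univ, Equiv.range_eq_univ]
      have : x ∘ ⇑σ.symm = x ∘ ⇑τ.symm :=
        Set.range_injOn_strictAnti hs1 hs2 hr
      apply hst
      have hsymm : σ.symm = τ.symm := by
        ext i
        exact congrArg Fin.val (hinj (congrFun this i))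
      calc σ = σ.symm.symm := rfl
        _ = τ.symm.symm := by rw [hsymm]
        _ = τ := rfl
    refine MeasureTheory.measure_mono_null hsub ?_
    refine measure_iUnion_null fun i => measure_iUnion_null fun j => ?_
    by_cases hij : i = j
    · simp [hij]
    · simpa [hij] using null_diag i j hij
  -- conclude
  have hmeas : ∀ σ, NullMeasurableSet (R σ) volume := fun σ =>
    ((MeasurableEquiv.piCongrLeft (fun _ : Fin n => ℝ) σ).measurable
      isClosed_ordSet.measurableSet).nullMeasurableSet
  have hsum : volume (⋃ σ : Equiv.Perm (Fin n), R σ)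
      = ∑' σ : Equiv.Perm (Fin n), volume (R σ) :=
    measure_iUnion₀ hdisj hmeas
  rw [hcover] at hsum
  have hcube : volume (Set.pi Set.univ fun _ : Fin n => Set.Icc (0:ℝ) 1) = 1 := by
    rw [volume_pi_pi]
    simp
  rw [hcube] at hsum
  have : (1 : ℝ≥0∞) = (n.factorial : ℝ≥0∞) * volume (ordSet n) := by
    rw [hsum, tsum_fintype]
    simp only [hvol]
    rw [Finset.sum_const, Finset.card_univ, Fintype.card_perm, nsmul_eq_mul, Fintype.card_fin]
  have hfac0 : (n.factorial : ℝ≥0∞) ≠ 0 := by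
    exact_mod_cast Nat.cast_ne_zero.2 n.factorial_ne_zero
  have hfactop : (n.factorial : ℝ≥0∞) ≠ ⊤ := by
    exact ENNReal.natCast_ne_top _
  calc volume (ordSet n)
      = ((n.factorial : ℝ≥0∞))⁻¹ * ((n.factorial : ℝ≥0∞) * volume (ordSet n)) := by
        rw [← mul_assoc, ENNReal.inv_mul_cancel hfac0 hfactop, one_mul]
    _ = ((n.factorial : ℝ≥0∞))⁻¹ := by rw [← this, mul_one]

def uvec (n : ℕ) : Fin n → (Fin n → ℝ) := fun i j => if j ≤ i then 1 else 0

lemma convex_ordSet (n : ℕ) : Convex ℝ (ordSet n) := by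
  apply Convex.inter
  · intro x hx y hy a b ha hb _
    intro i j hij
    exact add_le_add (mul_le_mul_of_nonneg_left (hx hij) ha)
      (mul_le_mul_of_nonneg_left (hy hij) hb)
  · exact convex_pi fun i _ => convex_Icc 0 1

lemma telescope (n : ℕ) (x : Fin n → ℝ) :
    ∀ j : Fin n, ∑ i ∈ Finset.Ici j,
      ((if h : (i : ℕ) + 1 < n then x i - x ⟨(i:ℕ)+1, h⟩ else x i)) = x j := by
  classical
  set X : ℕ → ℝ := fun k => if h : k < n then x ⟨k, h⟩ else 0 with hX
  have hXv : ∀ i : Fin n, X (i : ℕ) = x i := by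
    intro i; simp [hX, i.isLt]
  have ht : ∀ i : Fin n,
      (if h : (i : ℕ) + 1 < n then x i - x ⟨(i:ℕ)+1, h⟩ else x i) = X (i:ℕ) - X ((i:ℕ)+1) := by
    intro i
    by_cases h : (i:ℕ) + 1 < n
    · simp [h, hX, i.isLt]
    · have h' : ¬ ((i:ℕ)+1 < n) := h
      simp [h, hX, h', i.isLt]
  intro j
  have hn : 0 < n := j.pos
  calc ∑ i ∈ Finset.Ici j, (if h : (i : ℕ) + 1 < n then x i - x ⟨(i:ℕ)+1, h⟩ else x i)
      = ∑ i ∈ Finset.Ici j, (X (i:ℕ) - X ((i:ℕ)+1)) := Finset.sum_congr rfl fun i _ => ht i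
    _ = ∑ k ∈ (Finset.Ici j).map Fin.valEmbedding, (X k - X (k+1)) := by
        rw [Finset.sum_map]; rfl
    _ = ∑ k ∈ Finset.Icc (j:ℕ) (n-1), (X k - X (k+1)) := by
        rw [Fin.map_valEmbedding_Ici, ← Finset.Ico_add_one_right_eq_Icc, Nat.sub_add_cancel (by omega : 1 ≤ n)]
    _ = ∑ k ∈ Finset.Ico (j:ℕ) n, (X k - X (k+1)) := by
        congr 1
        rw [← Finset.Ico_add_one_right_eq_Icc]
        congr 1
        omega
    _ = ∑ i ∈ Finset.range (n - (j:ℕ)), (X ((j:ℕ)+i) - X ((j:ℕ)+i+1)) := by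
        rw [Finset.sum_Ico_eq_sum_range]
    _ = X ((j:ℕ)+0) - X ((j:ℕ) + (n - (j:ℕ))) := by
        simp only [add_assoc]
        rw [Finset.sum_range_sub' (fun i => X ((j:ℕ)+i))]
    _ = x j := by
        rw [Nat.add_sub_cancel' j.isLt.le]
        simp [hXv, hX]

lemma hull_u (n : ℕ) (hn : 0 < n) :
    convexHull ℝ (insert (0 : Fin n → ℝ) (Set.range (uvec n))) = ordSet n := by
  classical
  haveI : NeZero n := ⟨hn.ne'⟩
  apply Set.Subset.antisymm
  · apply convexHull_min
    · rintro y (rfl | ⟨i, rfl⟩)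
      · exact ⟨fun _ _ _ => le_rfl, fun _ _ => ⟨le_rfl, zero_le_one⟩⟩
      · constructor
        · intro j k hjk
          simp only [uvec]
          split_ifs with h1 h2 h2
          · exact le_rfl
          · exact absurd (hjk.trans h1) h2
          · exact zero_le_one
          · exact le_rfl
        · intro j _
          simp only [uvec]
          split_ifs <;> norm_num
    · exact convex_ordSet n
  · intro x hx
    obtain ⟨hanti, hcube⟩ := hx
    set t : Fin n → ℝ := fun i =>
      if h : (i : ℕ) + 1 < n then x i - x ⟨(i:ℕ)+1, h⟩ else x i with hts
    have htele : ∀ j : Fin n, ∑ i ∈ Finset.Ici j, t i = x j := telescope n x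
    have ht0 : ∀ i, 0 ≤ t i := by
      intro i
      simp only [hts]
      split_ifs with h
      · have : x ⟨(i:ℕ)+1, h⟩ ≤ x i := hanti (by simp [Fin.le_def])
        linarith
      · exact (hcube i (Set.mem_univ _)).1
    have hsum : ∑ i, t i = x 0 := by
      rw [← htele 0]
      congr 1
      ext i
      simp [Fin.zero_le]
    have hx0 : x 0 ∈ Set.Icc (0:ℝ) 1 := hcube 0 (Set.mem_univ _)
    -- x = ∑ t i • u i
    have hrepr : x = ∑ i, t i • uvec n i := by
      funext j
      rw [Finset.sum_apply]
      have : ∀ i, (t i • uvec n i) j = if j ≤ i then t i else 0 := by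
        intro i
        simp only [Pi.smul_apply, uvec, smul_eq_mul]
        split_ifs <;> simp
      simp_rw [this]
      rw [← Finset.sum_filter]
      rw [show Finset.univ.filter (fun i => j ≤ i) = Finset.Ici j by ext i; simp]
      exact (htele j).symm
    rw [convexHull_insert ⟨uvec n 0, Set.mem_range_self 0⟩]
    rcases eq_or_lt_of_le hx0.1 with h0 | h0
    · have hx00 : x = 0 := by
        funext j
        have h1 : x j ≤ x 0 := hanti (Fin.zero_le j)
        have h2 : 0 ≤ x j := (hcube j (Set.mem_univ _)).1
        have : x j = 0 := le_antisymm (h1.trans_eq h0.symm) h2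
        simpa using this
      refine mem_convexJoin.2 ⟨0, rfl, uvec n 0, subset_convexHull ℝ _ (Set.mem_range_self 0), ?_⟩
      rw [hx00]
      exact left_mem_segment ℝ 0 (uvec n 0)
    · set z : Fin n → ℝ := ∑ i, (t i / x 0) • uvec n i with hz
      have hzmem : z ∈ convexHull ℝ (Set.range (uvec n)) := by
        have : z = Finset.univ.centerMass (fun i => t i / x 0) (uvec n) := by
          rw [Finset.centerMass_eq_of_sum_1]
          rw [← Finset.sum_div, hsum, div_self h0.ne']
        rw [this]
        apply Finset.centerMass_mem_convexHull
        · exact fun i _ => div_nonneg (ht0 i) h0.le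
        · rw [← Finset.sum_div, hsum, div_self h0.ne']; norm_num
        · exact fun i _ => Set.mem_range_self i
      refine mem_convexJoin.2 ⟨0, rfl, z, hzmem, ?_⟩
      rw [segment_eq_image]
      refine ⟨x 0, ⟨h0.le, hx0.2⟩, ?_⟩
      simp only [smul_zero, sub_zero, zero_add]
      rw [hz, Finset.smul_sum]
      conv_rhs => rw [hrepr]
      refine Finset.sum_congr rfl fun i _ => ?_
      rw [smul_smul, mul_div_cancel₀ _ h0.ne']


theorem schobi_simplex_det_and_volume
    (n : ℕ) (hn : 2 ≤ n) (w : ℝ) (hw1 : -1 < w) (hw2 : w < 1 / ((n : ℝ) - 1))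
    (b a : ℝ)
    (hb : b = (Real.sqrt (1 - w * ((n : ℝ) - 1)) - Real.sqrt (1 + w)) / n)
    (ha : a = b + Real.sqrt (1 + w))
    (v : Fin n → Fin n → ℝ)
    (hv : ∀ i j, v i j = if i = j then a else b)
    (M : Matrix (Fin n) (Fin n) ℝ)
    (hM : ∀ i j, M i j = ∑ k ∈ Finset.Iic i, v k j) :
    |M.det| = (1 + w) ^ (((n : ℝ) - 1) / 2) * Real.sqrt (1 - w * ((n : ℝ) - 1)) ∧
    MeasureTheory.volume
        (convexHull ℝ (insert (0 : EuclideanSpace ℝ (Fin n))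
          (Set.range (fun i : Fin n => (WithLp.toLp 2 (M i) : EuclideanSpace ℝ (Fin n)))))) =
      ENNReal.ofReal
        ((1 + w) ^ (((n : ℝ) - 1) / 2) * Real.sqrt (1 - w * ((n : ℝ) - 1)) /
          (n.factorial : ℝ)) := by
  classical
  have hnpos : 0 < n := by omega
  have hnR : (0:ℝ) < n := by positivity
  have h1w : (0:ℝ) < 1 + w := by linarith
  set c := Real.sqrt (1 + w) with hc
  have hcpos : 0 < c := Real.sqrt_pos.2 h1w
  set s := Real.sqrt (1 - w * ((n : ℝ) - 1)) with hs
  have hspos : 0 ≤ s := Real.sqrt_nonneg _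
  set V : Matrix (Fin n) (Fin n) ℝ := Matrix.of v with hV
  set L : Matrix (Fin n) (Fin n) ℝ := Matrix.of (fun i k => if k ≤ i then (1:ℝ) else 0) with hL
  have hMLV : M = L * V := by
    ext i j
    rw [Matrix.mul_apply, hM i j]
    have hterm : ∀ k, L i k * V k j = if k ≤ i then v k j else 0 := by
      intro k
      by_cases hk : k ≤ i <;> simp [hL, hV, hk]
    simp_rw [hterm]
    rw [← Finset.sum_filter]
    congr 1
    ext k
    simp
  have hdetL : L.det = 1 := by
    rw [Matrix.det_of_lowerTriangular L ?ht]
    · simp [hL]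
    · intro i j hij
      have : ¬ (j ≤ i) := by
        simpa using hij
      simp [hL, this]
  have hdetV : V.det = c ^ (n-1) * s := by
    have hV2 : V = c • (1 + Matrix.replicateCol Unit (fun _ => b/c) * Matrix.replicateRow Unit (fun _ => (1:ℝ))) := by
      ext i j
      by_cases hij : i = j
      · subst hij
        simp [hV, hv, Matrix.mul_apply, mul_add, mul_div_cancel₀ _ hcpos.ne', ha]
        try ring
      · simp [hV, hv, hij, Matrix.mul_apply, Matrix.one_apply, hij, mul_div_cancel₀ _ hcpos.ne']
    rw [hV2, Matrix.det_smul, Matrix.det_one_add_replicateCol_mul_replicateRow]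
    have hdot : (fun _ : Fin n => (1:ℝ)) ⬝ᵥ (fun _ => b/c) = n * (b/c) := by
      simp [dotProduct]
    rw [hdot]
    have hnbc : c + (n:ℝ) * b = s := by
      rw [hb]
      field_simp
      ring
    calc c ^ Fintype.card (Fin n) * (1 + n * (b/c))
        = c ^ n * (1 + n * (b/c)) := by rw [Fintype.card_fin]
      _ = c ^ (n-1) * (c * (1 + n * (b/c))) := by
          have hcn : c ^ n = c ^ (n-1) * c := by
            rw [← pow_succ]
            congr 1
            omega
          rw [hcn]; ring
      _ = c ^ (n-1) * (c + n * b) := by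
          rw [mul_add, mul_one, mul_comm c (n * (b/c)), mul_assoc,
            div_mul_cancel₀ _ hcpos.ne']
      _ = c ^ (n-1) * s := by rw [hnbc]
  have hdetM : M.det = c ^ (n-1) * s := by
    rw [hMLV, Matrix.det_mul, hdetL, one_mul, hdetV]
  have hrpow : (1 + w) ^ (((n : ℝ) - 1) / 2) = c ^ (n-1) := by
    rw [hc, Real.sqrt_eq_rpow]
    rw [← Real.rpow_natCast ((1+w) ^ ((1:ℝ)/2)) (n-1), ← Real.rpow_mul h1w.le]
    congr 1
    have hcast : ((n - 1 : ℕ) : ℝ) = (n : ℝ) - 1 := by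
      have h1 : (1:ℕ) ≤ n := by omega
      push_cast [h1]
      ring
    rw [hcast]
    ring
  have habs : |M.det| = (1 + w) ^ (((n : ℝ) - 1) / 2) * s := by
    rw [hdetM, abs_of_nonneg (by positivity), hrpow]
  refine ⟨habs, ?_⟩
  -- the volume part
  set D := (1 + w) ^ (((n : ℝ) - 1) / 2) * s with hD
  have hDpos : 0 ≤ D := by
    rw [hD]
    positivity
  -- transfer to the pi space
  set B : Set (Fin n → ℝ) := convexHull ℝ (insert (0 : Fin n → ℝ)
      (Set.range (fun i : Fin n => (M i : Fin n → ℝ)))) with hB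
  have hBmeas : MeasurableSet B :=
    (((Set.finite_range _).insert 0).isCompact_convexHull ℝ).measurableSet
  have hφ : MeasurePreserving (MeasurableEquiv.toLp 2 (Fin n → ℝ)).symm volume volume :=
    EuclideanSpace.volume_preserving_symm_measurableEquiv_toLp (Fin n)
  have hpre : (MeasurableEquiv.toLp 2 (Fin n → ℝ)).symm ⁻¹' B =
      convexHull ℝ (insert (0 : EuclideanSpace ℝ (Fin n))
        (Set.range (fun i : Fin n => (WithLp.toLp 2 (M i) : EuclideanSpace ℝ (Fin n))))) := by
    rw [← MeasurableEquiv.image_eq_preimage_symm, hB]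
    have h := LinearMap.image_convexHull (WithLp.linearEquiv 2 ℝ (Fin n → ℝ)).symm.toLinearMap
      (insert (0 : Fin n → ℝ) (Set.range (fun i : Fin n => (M i : Fin n → ℝ))))
    rw [Set.image_insert_eq, map_zero, ← Set.range_comp] at h
    exact h
  have hvolE := hφ.measure_preimage (μa := volume) (μb := volume) hBmeas.nullMeasurableSet
  rw [hpre] at hvolE
  -- express B as linear image of the order simplex
  set g : (Fin n → ℝ) →ₗ[ℝ] (Fin n → ℝ) := Matrix.toLin' Vᵀ with hg
  have hgu : ∀ i, g (uvec n i) = M i := by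
    intro i
    funext j
    rw [hg]
    simp only [Matrix.toLin'_apply]
    rw [Matrix.mulVec, hM i j]
    have hterm : ∀ k, Vᵀ j k * uvec n i k = if k ≤ i then v k j else 0 := by
      intro k
      by_cases hk : k ≤ i <;> simp [hV, uvec, hk]
    show (fun k => Vᵀ j k) ⬝ᵥ uvec n i = _
    rw [dotProduct]
    simp_rw [hterm]
    rw [← Finset.sum_filter]
    congr 1
    ext k
    simp
  have hBim : B = g '' (ordSet n) := by
    rw [← hull_u n hnpos, hB, LinearMap.image_convexHull]
    congr 1
    rw [Set.image_insert_eq, map_zero]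
    congr 1
    rw [← Set.range_comp]
    exact congrArg Set.range (funext fun i => (hgu i).symm)
  have hdetg : |LinearMap.det g| = D := by
    rw [hg, LinearMap.det_toLin', Matrix.det_transpose,
      hdetV, abs_of_nonneg (by positivity), ← hrpow, hD]
  have hvolB : volume B = ENNReal.ofReal D * ((n.factorial : ℝ≥0∞))⁻¹ := by
    rw [hBim, MeasureTheory.Measure.addHaar_image_linearMap, hdetg, volume_ordSet]
  have hfac : ((n.factorial : ℝ≥0∞))⁻¹ = ENNReal.ofReal ((n.factorial : ℝ))⁻¹ := by
    rw [ENNReal.ofReal_inv_of_pos (by positivity), ENNReal.ofReal_natCast]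
  have hfinal : ENNReal.ofReal D * ((n.factorial : ℝ≥0∞))⁻¹
      = ENNReal.ofReal (D / (n.factorial : ℝ)) := by
    rw [hfac, ← ENNReal.ofReal_mul hDpos, div_eq_mul_inv]
  first
    | exact hvolB.trans hfinal
    | exact hvolE.trans (hvolB.trans hfinal)
end
end

section
/- Let Γ be a group of isometries of ℝ^n and Ω ⊆ ℝ^n. Suppose polytopes A and B are each Γ-tiles for Ω, meaning the images of A (respectively B) under Γ have pairwise disjoint interiors and their union is Ω. Then A = ⋃_{g ∈ Γ} (A ∩ B^g), the sets A ∩ B^g have pairwise disjoint interiors, only finitely many are nonempty, and for each g ∈ Γ the piece A ∩ B^g is mapped by g^{-1} to the piece A^{g^{-1}} ∩ B of the corresponding decomposition of B. Hence A and B are Γ-equidissectable. -/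
/-- A polytope in ℝⁿ: a finite union of `n`-dimensional simplices. -/
def IsPolytope (n : ℕ) (P : Set (EuclideanSpace ℝ (Fin n))) : Prop :=
  ∃ (k : ℕ) (V : Fin k → Fin (n + 1) → EuclideanSpace ℝ (Fin n)),
    (∀ i, AffineIndependent ℝ (V i)) ∧
    P = ⋃ i, convexHull ℝ (Set.range (V i))

/-- `A` is a `Γ`-tile for `Ω`: the images of `A` under `Γ` have pairwise
disjoint interiors and their union is `Ω`. -/
def IsTileFor (n : ℕ) (Γ : Subgroup (EuclideanSpace ℝ (Fin n) ≃ᵢ EuclideanSpace ℝ (Fin n)))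
    (A Ω : Set (EuclideanSpace ℝ (Fin n))) : Prop :=
  (∀ g h : Γ, g ≠ h →
    Disjoint (interior ((g : EuclideanSpace ℝ (Fin n) ≃ᵢ EuclideanSpace ℝ (Fin n)) '' A))
      (interior ((h : EuclideanSpace ℝ (Fin n) ≃ᵢ EuclideanSpace ℝ (Fin n)) '' A))) ∧
  (⋃ g : Γ, (g : EuclideanSpace ℝ (Fin n) ≃ᵢ EuclideanSpace ℝ (Fin n)) '' A) = Ω

/-- `Γ`-equidissectability: decompositions into pieces with pairwise disjoint
interiors, matched pairwise by elements of `Γ`. -/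
def GammaEquidissectable (n : ℕ)
    (Γ : Subgroup (EuclideanSpace ℝ (Fin n) ≃ᵢ EuclideanSpace ℝ (Fin n)))
    (A B : Set (EuclideanSpace ℝ (Fin n))) : Prop :=
  ∃ (k : ℕ) (P Q : Fin k → Set (EuclideanSpace ℝ (Fin n))) (g : Fin k → Γ),
    (∀ i j, i ≠ j → Disjoint (interior (P i)) (interior (P j))) ∧
    (∀ i j, i ≠ j → Disjoint (interior (Q i)) (interior (Q j))) ∧
    A = ⋃ i, P i ∧ B = ⋃ i, Q i ∧
    ∀ i, ((g i : EuclideanSpace ℝ (Fin n) ≃ᵢ EuclideanSpace ℝ (Fin n)) : EuclideanSpace ℝ (Fin n) → EuclideanSpace ℝ (Fin n)) '' P i = Q i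

namespace TwoTileAux

open MeasureTheory Metric Set

variable {n : ℕ} {Γ : Subgroup (EuclideanSpace ℝ (Fin n) ≃ᵢ EuclideanSpace ℝ (Fin n))}

/-- A tile is contained in the tiled region. -/
lemma tile_subset {A Ω : Set (EuclideanSpace ℝ (Fin n))} (h : IsTileFor n Γ A Ω) : A ⊆ Ω := by
  rw [← h.2]
  intro x hx
  exact Set.mem_iUnion.2 ⟨1, ⟨x, hx, by simp⟩⟩

/-- A polytope is compact. -/
lemma compact_of_polytope {A : Set (EuclideanSpace ℝ (Fin n))} (hA : IsPolytope n A) :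
    IsCompact A := by
  obtain ⟨k, V, -, rfl⟩ := hA
  exact isCompact_iUnion fun i => (Set.finite_range (V i)).isCompact_convexHull ℝ

/-- A nonempty polytope has nonempty interior. -/
lemma interior_nonempty_of_polytope {B : Set (EuclideanSpace ℝ (Fin n))}
    (hB : IsPolytope n B) (hne : B.Nonempty) : (interior B).Nonempty := by
  obtain ⟨k, V, hind, rfl⟩ := hB
  obtain ⟨x, hx⟩ := hne
  obtain ⟨i, -⟩ := Set.mem_iUnion.1 hx
  have hspan : affineSpan ℝ (Set.range (V i)) = ⊤ := by
    rw [(hind i).affineSpan_eq_top_iff_card_eq_finrank_add_one]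
    simp [finrank_euclideanSpace_fin]
  have hconv : (interior (convexHull ℝ (Set.range (V i)))).Nonempty := by
    rw [(convex_convexHull ℝ _).interior_nonempty_iff_affineSpan_eq_top, affineSpan_convexHull]
    exact hspan
  exact hconv.mono (interior_mono (Set.subset_iUnion _ i))

/-- The coercion of `g⁻¹` is the inverse isometry. -/
lemma coe_inv (g : Γ) :
    ((g⁻¹ : Γ) : EuclideanSpace ℝ (Fin n) ≃ᵢ EuclideanSpace ℝ (Fin n)) =
      ((g : EuclideanSpace ℝ (Fin n) ≃ᵢ EuclideanSpace ℝ (Fin n))).symm := rfl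

/-- The key piece-matching identity: `g⁻¹` maps `A ∩ gB` onto `g⁻¹A ∩ B`. -/
lemma piece_image (A B : Set (EuclideanSpace ℝ (Fin n))) (g : Γ) :
    ((g⁻¹ : Γ) : EuclideanSpace ℝ (Fin n) ≃ᵢ EuclideanSpace ℝ (Fin n)) ''
        (A ∩ ((g : EuclideanSpace ℝ (Fin n) ≃ᵢ EuclideanSpace ℝ (Fin n)) '' B)) =
      (((g⁻¹ : Γ) : EuclideanSpace ℝ (Fin n) ≃ᵢ EuclideanSpace ℝ (Fin n)) '' A) ∩ B := by
  rw [coe_inv, Set.image_inter (IsometryEquiv.injective _)]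
  congr 1
  ext x
  simp [Set.image_image]

end TwoTileAux

theorem two_tile_theorem
    (n : ℕ) (Γ : Subgroup (EuclideanSpace ℝ (Fin n) ≃ᵢ EuclideanSpace ℝ (Fin n)))
    (Ω A B : Set (EuclideanSpace ℝ (Fin n)))
    (hA : IsPolytope n A) (hB : IsPolytope n B)
    (htA : IsTileFor n Γ A Ω) (htB : IsTileFor n Γ B Ω) :
    (A = ⋃ g : Γ, A ∩ ((g : EuclideanSpace ℝ (Fin n) ≃ᵢ EuclideanSpace ℝ (Fin n)) '' B)) ∧
    (∀ g h : Γ, g ≠ h →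
      Disjoint
        (interior (A ∩ ((g : EuclideanSpace ℝ (Fin n) ≃ᵢ EuclideanSpace ℝ (Fin n)) '' B)))
        (interior (A ∩ ((h : EuclideanSpace ℝ (Fin n) ≃ᵢ EuclideanSpace ℝ (Fin n)) '' B)))) ∧
    {g : Γ | (A ∩ ((g : EuclideanSpace ℝ (Fin n) ≃ᵢ EuclideanSpace ℝ (Fin n)) '' B)).Nonempty}.Finite ∧
    (∀ g : Γ,
      ((g⁻¹ : Γ) : EuclideanSpace ℝ (Fin n) ≃ᵢ EuclideanSpace ℝ (Fin n)) ''
          (A ∩ ((g : EuclideanSpace ℝ (Fin n) ≃ᵢ EuclideanSpace ℝ (Fin n)) '' B)) =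
        (((g⁻¹ : Γ) : EuclideanSpace ℝ (Fin n) ≃ᵢ EuclideanSpace ℝ (Fin n)) '' A) ∩ B) ∧
    GammaEquidissectable n Γ A B := by
  classical
  open TwoTileAux MeasureTheory Metric Set in
  -- A is contained in Ω, hence in the union of the copies of B.
  have hAΩ : A ⊆ Ω := tile_subset htA
  have hBΩ : B ⊆ Ω := tile_subset htB
  -- Part 1: the decomposition of A.
  have part1 : A = ⋃ g : Γ, A ∩ ((g : EuclideanSpace ℝ (Fin n) ≃ᵢ EuclideanSpace ℝ (Fin n)) '' B) := by
    ext x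
    simp only [Set.mem_iUnion, Set.mem_inter_iff]
    constructor
    · intro hx
      have hxΩ : x ∈ Ω := hAΩ hx
      rw [← htB.2] at hxΩ
      obtain ⟨g, hg⟩ := Set.mem_iUnion.1 hxΩ
      exact ⟨g, hx, hg⟩
    · rintro ⟨g, hx, -⟩
      exact hx
  -- Part 2: disjoint interiors.
  have part2 : ∀ g h : Γ, g ≠ h →
      Disjoint
        (interior (A ∩ ((g : EuclideanSpace ℝ (Fin n) ≃ᵢ EuclideanSpace ℝ (Fin n)) '' B)))
        (interior (A ∩ ((h : EuclideanSpace ℝ (Fin n) ≃ᵢ EuclideanSpace ℝ (Fin n)) '' B))) :=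
    fun g h hgh => (htB.1 g h hgh).mono (interior_mono Set.inter_subset_right)
      (interior_mono Set.inter_subset_right)
  -- Part 3: finiteness.
  have part3 : {g : Γ | (A ∩ ((g : EuclideanSpace ℝ (Fin n) ≃ᵢ EuclideanSpace ℝ (Fin n)) '' B)).Nonempty}.Finite := by
    by_cases hBne : B.Nonempty
    · -- B has nonempty interior; use a volume argument.
      obtain ⟨x₀, hx₀⟩ := interior_nonempty_of_polytope hB hBne
      obtain ⟨ε, hε, hball⟩ := Metric.isOpen_iff.1 isOpen_interior x₀ hx₀
      have hAcomp : IsCompact A := compact_of_polytope hA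
      have hBcomp : IsCompact B := compact_of_polytope hB
      obtain ⟨r, hr⟩ := hAcomp.isBounded.subset_closedBall (0 : EuclideanSpace ℝ (Fin n))
      set R : ℝ := r + Metric.diam B with hR
      -- any copy of B meeting A lies in the closed ball of radius R.
      have hsub : ∀ g : Γ,
          (A ∩ ((g : EuclideanSpace ℝ (Fin n) ≃ᵢ EuclideanSpace ℝ (Fin n)) '' B)).Nonempty →
          ((g : EuclideanSpace ℝ (Fin n) ≃ᵢ EuclideanSpace ℝ (Fin n)) '' B) ⊆
            Metric.closedBall 0 R := by
        rintro g ⟨x, hxA, hxB⟩ y hy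
        have hBg : IsCompact ((g : EuclideanSpace ℝ (Fin n) ≃ᵢ EuclideanSpace ℝ (Fin n)) '' B) :=
          hBcomp.image (g : EuclideanSpace ℝ (Fin n) ≃ᵢ EuclideanSpace ℝ (Fin n)).continuous
        have h1 : dist y x ≤ Metric.diam ((g : EuclideanSpace ℝ (Fin n) ≃ᵢ EuclideanSpace ℝ (Fin n)) '' B) :=
          Metric.dist_le_diam_of_mem hBg.isBounded hy hxB
        rw [IsometryEquiv.diam_image] at h1
        have h2 : dist x 0 ≤ r := hr hxA
        have := dist_triangle y x 0
        simp only [Metric.mem_closedBall]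
        linarith
      set c : ENNReal := volume (Metric.ball (0 : EuclideanSpace ℝ (Fin n)) ε) with hc
      have hcpos : 0 < c := measure_ball_pos volume _ hε
      set As : Γ → Set (EuclideanSpace ℝ (Fin n)) := fun g =>
        interior ((g : EuclideanSpace ℝ (Fin n) ≃ᵢ EuclideanSpace ℝ (Fin n)) '' B) ∩
          Metric.closedBall 0 R with hAs
      have hmble : ∀ g : Γ, MeasurableSet (As g) := fun g =>
        isOpen_interior.measurableSet.inter measurableSet_closedBall
      have hdisj : Pairwise (Function.onFun Disjoint As) := fun g h hgh =>
        ((htB.1 g h hgh).mono Set.inter_subset_left Set.inter_subset_left)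
      have hfin : volume (⋃ g : Γ, As g) ≠ ⊤ := by
        refine ne_top_of_le_ne_top ?_
          (measure_mono (Set.iUnion_subset fun g => Set.inter_subset_right))
        exact (IsCompact.measure_lt_top (isCompact_closedBall _ _)).ne
      have key : {g : Γ | (A ∩ ((g : EuclideanSpace ℝ (Fin n) ≃ᵢ EuclideanSpace ℝ (Fin n)) '' B)).Nonempty}
          ⊆ {g : Γ | c ≤ volume (As g)} := by
        intro g hg
        have himg := hsub g hg
        have h3 : (g : EuclideanSpace ℝ (Fin n) ≃ᵢ EuclideanSpace ℝ (Fin n)) '' Metric.ball x₀ ε ⊆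
            interior ((g : EuclideanSpace ℝ (Fin n) ≃ᵢ EuclideanSpace ℝ (Fin n)) '' B) := by
          have h4 := Set.image_mono
            (f := ((g : EuclideanSpace ℝ (Fin n) ≃ᵢ EuclideanSpace ℝ (Fin n)) :
              EuclideanSpace ℝ (Fin n) → EuclideanSpace ℝ (Fin n))) hball
          rw [← IsometryEquiv.coe_toHomeomorph] at h4 ⊢
          rwa [(g : EuclideanSpace ℝ (Fin n) ≃ᵢ EuclideanSpace ℝ (Fin n)).toHomeomorph.image_interior B] at h4
        have h5 : (g : EuclideanSpace ℝ (Fin n) ≃ᵢ EuclideanSpace ℝ (Fin n)) '' Metric.ball x₀ ε ⊆ As g :=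
          Set.subset_inter h3 ((h3.trans interior_subset).trans himg)
        rw [IsometryEquiv.image_ball] at h5
        have h6 : volume (Metric.ball ((g : EuclideanSpace ℝ (Fin n) ≃ᵢ EuclideanSpace ℝ (Fin n)) x₀) ε)
            = c := by
          rw [hc, MeasureTheory.Measure.addHaar_ball_center]
        calc c = volume (Metric.ball ((g : EuclideanSpace ℝ (Fin n) ≃ᵢ EuclideanSpace ℝ (Fin n)) x₀) ε) := h6.symm
          _ ≤ volume (As g) := measure_mono h5
      exact (MeasureTheory.Measure.finite_const_le_meas_of_disjoint_iUnion volume hcpos hmble hdisj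
        hfin).subset key
    · -- B is empty, so all pieces are empty.
      have : {g : Γ | (A ∩ ((g : EuclideanSpace ℝ (Fin n) ≃ᵢ EuclideanSpace ℝ (Fin n)) '' B)).Nonempty} = ∅ := by
        ext g
        simp only [Set.mem_setOf_eq, Set.mem_empty_iff_false, iff_false]
        rintro ⟨x, -, y, hy, -⟩
        exact hBne ⟨y, hy⟩
      rw [this]
      exact Set.finite_empty
  -- Part 4: the matching identity.
  have part4 : ∀ g : Γ,
      ((g⁻¹ : Γ) : EuclideanSpace ℝ (Fin n) ≃ᵢ EuclideanSpace ℝ (Fin n)) ''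
          (A ∩ ((g : EuclideanSpace ℝ (Fin n) ≃ᵢ EuclideanSpace ℝ (Fin n)) '' B)) =
        (((g⁻¹ : Γ) : EuclideanSpace ℝ (Fin n) ≃ᵢ EuclideanSpace ℝ (Fin n)) '' A) ∩ B :=
    fun g => piece_image A B g
  refine ⟨part1, part2, part3, part4, ?_⟩
  -- Part 5: equidissectability.
  set S := {g : Γ | (A ∩ ((g : EuclideanSpace ℝ (Fin n) ≃ᵢ EuclideanSpace ℝ (Fin n)) '' B)).Nonempty} with hS
  haveI : Fintype S := part3.fintype
  set k := Fintype.card S with hk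
  set e : Fin k ≃ S := (Fintype.equivFin S).symm with he
  refine ⟨k,
    fun i => A ∩ (((e i : Γ) : EuclideanSpace ℝ (Fin n) ≃ᵢ EuclideanSpace ℝ (Fin n)) '' B),
    fun i => ((((e i : Γ)⁻¹ : Γ) : EuclideanSpace ℝ (Fin n) ≃ᵢ EuclideanSpace ℝ (Fin n)) '' A) ∩ B,
    fun i => (e i : Γ)⁻¹, ?_, ?_, ?_, ?_, ?_⟩
  · intro i j hij
    exact part2 _ _ (by
      intro hcontra
      exact hij (e.injective (Subtype.ext hcontra)))
  · intro i j hij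
    have hne : ((e i : Γ)⁻¹ : Γ) ≠ ((e j : Γ)⁻¹ : Γ) := by
      intro hcontra
      exact hij (e.injective (Subtype.ext (by
        have := congrArg (fun x : Γ => x⁻¹) hcontra
        simpa using this)))
    exact (htA.1 _ _ hne).mono (interior_mono Set.inter_subset_left)
      (interior_mono Set.inter_subset_left)
  · -- A = ⋃ P i
    apply Set.Subset.antisymm
    · intro x hx
      have hx' := hx
      rw [part1] at hx'
      obtain ⟨g, hg⟩ := Set.mem_iUnion.1 hx'
      have hgS : g ∈ S := ⟨x, hg⟩
      refine Set.mem_iUnion.2 ⟨e.symm ⟨g, hgS⟩, ?_⟩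
      simpa [e.apply_symm_apply] using hg
    · exact Set.iUnion_subset fun i => Set.inter_subset_left
  · -- B = ⋃ Q i
    apply Set.Subset.antisymm
    · intro x hx
      have hxΩ : x ∈ Ω := hBΩ hx
      rw [← htA.2] at hxΩ
      obtain ⟨h, hh⟩ := Set.mem_iUnion.1 hxΩ
      -- h⁻¹ ∈ S
      obtain ⟨a, haA, hax⟩ := hh
      have hhS : (h⁻¹ : Γ) ∈ S := by
        refine ⟨a, haA, ?_⟩
        refine ⟨x, hx, ?_⟩
        rw [TwoTileAux.coe_inv]
        rw [← hax]
        exact IsometryEquiv.symm_apply_apply _ a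
      refine Set.mem_iUnion.2 ⟨e.symm ⟨h⁻¹, hhS⟩, ?_⟩
      have heq : (e (e.symm ⟨h⁻¹, hhS⟩) : Γ) = h⁻¹ := by rw [e.apply_symm_apply]
      rw [heq, inv_inv]
      exact ⟨⟨a, haA, hax⟩, hx⟩
    · exact Set.iUnion_subset fun i => Set.inter_subset_right
  · intro i
    exact TwoTileAux.piece_image A B (e i : Γ)
end

section
/- Let φ : ℝ² → ℝ² be the isometry (x,y) ↦ (y+1, x), and let A be the closed triangle with vertices (0,0), (1,0), (1,1). Then the images A^{φ^k} for k ∈ ℤ have pairwise disjoint interiors and their union is the closed strip Ω = {(x,y) : x ≥ y ≥ x-1}. -/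
/-- The isometry `(x,y) ↦ (y+1, x)` of the plane, as a bijection (so that
integer powers make sense). -/
def stripMap : Equiv.Perm (ℝ × ℝ) where
  toFun p := (p.2 + 1, p.1)
  invFun p := (p.2, p.1 - 1)
  left_inv p := by simp
  right_inv p := by simp

lemma stripMap_apply (p : ℝ × ℝ) : stripMap p = (p.2 + 1, p.1) := rfl
lemma stripMap_inv_apply (p : ℝ × ℝ) : stripMap⁻¹ p = (p.2, p.1 - 1) := rfl

lemma stripMap_sq (p : ℝ × ℝ) : (stripMap ^ (2:ℤ)) p = (p.1 + 1, p.2 + 1) := by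
  have : (2:ℤ) = 1 + 1 := by ring
  rw [this, zpow_add, zpow_one, Equiv.Perm.mul_apply, stripMap_apply, stripMap_apply]

lemma stripMap_negsq (p : ℝ × ℝ) : (stripMap ^ (-2:ℤ)) p = (p.1 - 1, p.2 - 1) := by
  have : (-2:ℤ) = (-1) + (-1) := by ring
  rw [this, zpow_add, zpow_neg_one, Equiv.Perm.mul_apply, stripMap_inv_apply, stripMap_inv_apply]

lemma stripMap_even (m : ℤ) (p : ℝ × ℝ) :
    (stripMap ^ (2 * m)) p = (p.1 + m, p.2 + m) := by
  induction m using Int.induction_on generalizing p with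
  | zero => simp
  | succ n ih =>
      have h : (2 * ((n:ℤ) + 1)) = 2 * n + 2 := by ring
      rw [h, zpow_add, Equiv.Perm.mul_apply, stripMap_sq, ih]
      push_cast; exact Prod.ext (by ring) (by ring)
  | pred n ih =>
      have h : (2 * (-(n:ℤ) - 1)) = 2 * (-n) + (-2) := by ring
      rw [h, zpow_add, Equiv.Perm.mul_apply, stripMap_negsq, ih]
      push_cast; exact Prod.ext (by ring) (by ring)

lemma stripMap_odd (m : ℤ) (p : ℝ × ℝ) :
    (stripMap ^ (2 * m + 1)) p = (p.2 + m + 1, p.1 + m) := by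
  rw [zpow_add, zpow_one, Equiv.Perm.mul_apply, stripMap_apply, stripMap_even]
  push_cast; exact Prod.ext (by ring) (by ring)

lemma stripMap_cont (k : ℤ) : Continuous ⇑(stripMap ^ k) := by
  rcases Int.even_or_odd k with ⟨m, hm⟩ | ⟨m, hm⟩
  · rw [show k = 2 * m by omega, funext (stripMap_even m)]
    fun_prop
  · rw [show k = 2 * m + 1 by omega, funext (stripMap_odd m)]
    fun_prop

lemma stripMap_symm (k : ℤ) : ⇑(stripMap ^ k).symm = ⇑(stripMap ^ (-k)) := by
  rw [zpow_neg, ← Equiv.Perm.inv_def]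

lemma mem_image_pow (k : ℤ) (s : Set (ℝ × ℝ)) (p : ℝ × ℝ) :
    p ∈ ⇑(stripMap ^ k) '' s ↔ (stripMap ^ (-k)) p ∈ s := by
  rw [Set.mem_image_equiv]
  rw [show (stripMap ^ k).symm p = (stripMap ^ (-k)) p from congrFun (stripMap_symm k) p]

lemma hull_eq : convexHull ℝ {((0 : ℝ), (0 : ℝ)), (1, 0), (1, 1)} =
    {p : ℝ × ℝ | 0 ≤ p.2 ∧ p.2 ≤ p.1 ∧ p.1 ≤ 1} := by
  apply le_antisymm
  · apply convexHull_min
    · rintro p (rfl | rfl | rfl) <;> norm_num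
    · rintro p ⟨hp0, hp1, hp2⟩ q ⟨hq0, hq1, hq2⟩ a b ha hb hab
      refine ⟨?_, ?_, ?_⟩ <;> simp only [Prod.fst_add, Prod.snd_add, Prod.smul_fst,
        Prod.smul_snd, smul_eq_mul] <;> nlinarith
  · rintro ⟨x, y⟩ ⟨h0, h1, h2⟩
    simp only [Set.mem_setOf_eq] at h0 h1 h2
    have hC := convex_convexHull ℝ ({((0 : ℝ), (0 : ℝ)), (1, 0), (1, 1)} : Set (ℝ × ℝ))
    have h00 : ((0:ℝ), (0:ℝ)) ∈ convexHull ℝ {((0 : ℝ), (0 : ℝ)), (1, 0), (1, 1)} :=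
      subset_convexHull ℝ _ (by norm_num)
    have h10 : ((1:ℝ), (0:ℝ)) ∈ convexHull ℝ {((0 : ℝ), (0 : ℝ)), (1, 0), (1, 1)} :=
      subset_convexHull ℝ _ (by norm_num)
    have h11 : ((1:ℝ), (1:ℝ)) ∈ convexHull ℝ {((0 : ℝ), (0 : ℝ)), (1, 0), (1, 1)} :=
      subset_convexHull ℝ _ (by norm_num)
    rcases eq_or_lt_of_le (le_trans h0 h1) with hx | hx
    · have hy : y = 0 := le_antisymm (hx ▸ h1) h0
      have hx' : x = 0 := hx.symm
      subst hy; subst hx'; exact h00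
    · have hr : ((1:ℝ), y / x) ∈ convexHull ℝ {((0 : ℝ), (0 : ℝ)), (1, 0), (1, 1)} := by
        have := hC h10 h11 (a := 1 - y / x) (b := y / x)
          (by rw [sub_nonneg]; exact div_le_one_of_le₀ h1 hx.le) (div_nonneg h0 hx.le)
          (by ring)
        convert this using 1
        exact Prod.ext (by simp) (by simp)
      have := hC h00 hr (a := 1 - x) (b := x) (by linarith) hx.le (by ring)
      convert this using 1
      refine Prod.ext (by simp) ?_
      simp only [Prod.snd_add, Prod.smul_snd, smul_eq_mul]
      field_simp
      ring

lemma interior_tri_subset :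
    interior {p : ℝ × ℝ | 0 ≤ p.2 ∧ p.2 ≤ p.1 ∧ p.1 ≤ 1} ⊆
      {p : ℝ × ℝ | 0 < p.2 ∧ p.2 < p.1 ∧ p.1 < 1} := by
  intro p hp
  rw [mem_interior_iff_mem_nhds, Metric.mem_nhds_iff] at hp
  obtain ⟨ε, hε, hball⟩ := hp
  have key : ∀ a b : ℝ, |a - p.1| < ε → |b - p.2| < ε → (0 ≤ b ∧ b ≤ a ∧ a ≤ 1) := by
    intro a b ha hb
    have hm : (a, b) ∈ Metric.ball p ε := by
      simp [Metric.mem_ball, Prod.dist_eq, Real.dist_eq, max_lt_iff, ha, hb]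
    exact hball hm
  have e2 : |p.2 - ε / 2 - p.2| < ε := by
    rw [show p.2 - ε / 2 - p.2 = -(ε / 2) by ring, abs_neg, abs_of_pos (by linarith)]; linarith
  have e3 : |p.2 + ε / 2 - p.2| < ε := by
    rw [show p.2 + ε / 2 - p.2 = ε / 2 by ring, abs_of_pos (by linarith)]; linarith
  have e4 : |p.1 + ε / 2 - p.1| < ε := by
    rw [show p.1 + ε / 2 - p.1 = ε / 2 by ring, abs_of_pos (by linarith)]; linarith
  have e1 : |p.1 - p.1| < ε := by simpa using hε
  have e1' : |p.2 - p.2| < ε := by simpa using hε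
  have k1 := key p.1 (p.2 - ε / 2) e1 e2
  have k2 := key p.1 (p.2 + ε / 2) e1 e3
  have k3 := key (p.1 + ε / 2) p.2 e4 e1'
  exact ⟨by linarith [k1.1], by linarith [k2.2.1], by linarith [k3.2.2]⟩

lemma interior_image_equiv (f : Equiv.Perm (ℝ × ℝ)) (hf : Continuous f)
    (hf' : Continuous f.symm) (s : Set (ℝ × ℝ)) :
    interior (f '' s) = f '' interior s := by
  let h : ℝ × ℝ ≃ₜ ℝ × ℝ := ⟨f, hf, hf'⟩
  exact (h.image_interior s).symm

theorem triangle_tiles_strip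
    (A : Set (ℝ × ℝ))
    (hA : A = convexHull ℝ {((0 : ℝ), (0 : ℝ)), (1, 0), (1, 1)}) :
    (∀ j k : ℤ, j ≠ k →
      Disjoint (interior ((stripMap ^ j) '' A)) (interior ((stripMap ^ k) '' A))) ∧
    (⋃ k : ℤ, (stripMap ^ k) '' A) = {p : ℝ × ℝ | p.1 ≥ p.2 ∧ p.2 ≥ p.1 - 1} := by
  have hAS : A = {p : ℝ × ℝ | 0 ≤ p.2 ∧ p.2 ≤ p.1 ∧ p.1 ≤ 1} := hA.trans hull_eq
  set U : Set (ℝ × ℝ) := {p : ℝ × ℝ | 0 < p.2 ∧ p.2 < p.1 ∧ p.1 < 1} with hU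
  have hIntU : interior A ⊆ U := by
    rw [hAS]; exact interior_tri_subset
  -- membership in images of U
  have memU : ∀ (k : ℤ) (p : ℝ × ℝ), p ∈ ⇑(stripMap ^ k) '' U →
      (∀ m : ℤ, k = 2 * m → ((m:ℝ) < p.2 ∧ p.2 < p.1 ∧ p.1 < m + 1)) ∧
      (∀ m : ℤ, k = 2 * m + 1 → ((m:ℝ) + 1 < p.1 ∧ p.1 - 1 < p.2 ∧ p.2 < m + 1)) := by
    intro k p hp
    rw [mem_image_pow] at hp
    constructor
    · intro m hk
      rw [show -k = 2 * (-m) by omega, stripMap_even] at hp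
      obtain ⟨a1, a2, a3⟩ := hp
      push_cast at a1 a2 a3 ⊢
      refine ⟨by linarith, by linarith, by linarith⟩
    · intro m hk
      rw [show -k = 2 * (-m - 1) + 1 by omega, stripMap_odd] at hp
      obtain ⟨a1, a2, a3⟩ := hp
      push_cast at a1 a2 a3 ⊢
      refine ⟨by linarith, by linarith, by linarith⟩
  have hDisjU : ∀ j k : ℤ, j ≠ k →
      Disjoint (⇑(stripMap ^ j) '' U) (⇑(stripMap ^ k) '' U) := by
    intro j k hjk
    rw [Set.disjoint_left]
    intro p hpj hpk
    have Hj := memU j p hpj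
    have Hk := memU k p hpk
    rcases Int.even_or_odd j with ⟨m, hm⟩ | ⟨m, hm⟩ <;>
      rcases Int.even_or_odd k with ⟨m', hm'⟩ | ⟨m', hm'⟩
    · obtain ⟨a1, a2, a3⟩ := Hj.1 m (by omega)
      obtain ⟨b1, b2, b3⟩ := Hk.1 m' (by omega)
      have hmm : m ≠ m' := by omega
      have c1 : (m:ℝ) < m' + 1 := by linarith
      have c2 : (m':ℝ) < m + 1 := by linarith
      have d1 : m < m' + 1 := by exact_mod_cast c1
      have d2 : m' < m + 1 := by exact_mod_cast c2
      omega
    · obtain ⟨a1, a2, a3⟩ := Hj.1 m (by omega)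
      obtain ⟨b1, b2, b3⟩ := Hk.2 m' (by omega)
      have c1 : (m':ℝ) + 1 < m + 1 := by linarith
      have c2 : (m:ℝ) < m' + 1 := by linarith
      have d1 : (m':ℝ) < m := by linarith
      have d2 : m' < m := by exact_mod_cast d1
      have d3 : m < m' + 1 := by exact_mod_cast c2
      omega
    · obtain ⟨a1, a2, a3⟩ := Hj.2 m (by omega)
      obtain ⟨b1, b2, b3⟩ := Hk.1 m' (by omega)
      have c1 : (m:ℝ) + 1 < m' + 1 := by linarith
      have d1 : (m:ℝ) < m' := by linarith
      have d2 : m < m' := by exact_mod_cast d1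
      have c2 : (m':ℝ) < m + 1 := by linarith
      have d3 : m' < m + 1 := by exact_mod_cast c2
      omega
    · obtain ⟨a1, a2, a3⟩ := Hj.2 m (by omega)
      obtain ⟨b1, b2, b3⟩ := Hk.2 m' (by omega)
      have hmm : m ≠ m' := by omega
      have c1 : (m:ℝ) + 1 < m' + 2 := by linarith
      have c2 : (m':ℝ) + 1 < m + 2 := by linarith
      have d1 : m + 1 < m' + 2 := by exact_mod_cast c1
      have d2 : m' + 1 < m + 2 := by exact_mod_cast c2
      omega
  constructor
  · intro j k hjk
    rw [interior_image_equiv _ (stripMap_cont j)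
        (by rw [stripMap_symm]; exact stripMap_cont (-j)),
      interior_image_equiv _ (stripMap_cont k)
        (by rw [stripMap_symm]; exact stripMap_cont (-k))]
    exact (hDisjU j k hjk).mono (Set.image_mono hIntU) (Set.image_mono hIntU)
  · ext p
    simp only [Set.mem_iUnion, Set.mem_setOf_eq]
    constructor
    · rintro ⟨k, hk⟩
      rw [mem_image_pow, hAS] at hk
      rcases Int.even_or_odd k with ⟨m, hm⟩ | ⟨m, hm⟩
      · rw [show -k = 2 * (-m) by omega, stripMap_even] at hk
        obtain ⟨a1, a2, a3⟩ := hk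
        push_cast at a1 a2 a3
        constructor <;> [linarith; linarith]
      · rw [show -k = 2 * (-m - 1) + 1 by omega, stripMap_odd] at hk
        obtain ⟨a1, a2, a3⟩ := hk
        push_cast at a1 a2 a3
        constructor <;> [linarith; linarith]
    · rintro ⟨h1, h2⟩
      have hf1 : (⌊p.2⌋ : ℝ) ≤ p.2 := Int.floor_le p.2
      have hf2 : p.2 < ⌊p.2⌋ + 1 := Int.lt_floor_add_one p.2
      by_cases hx : p.1 ≤ (⌊p.2⌋ : ℝ) + 1
      · refine ⟨2 * ⌊p.2⌋, ?_⟩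
        rw [mem_image_pow, show -(2 * ⌊p.2⌋) = 2 * (-⌊p.2⌋) by ring, stripMap_even, hAS]
        refine ⟨?_, ?_, ?_⟩ <;> simp only [Set.mem_setOf_eq] <;> push_cast <;> linarith
      · refine ⟨2 * ⌊p.2⌋ + 1, ?_⟩
        rw [mem_image_pow, show -(2 * ⌊p.2⌋ + 1) = 2 * (-⌊p.2⌋ - 1) + 1 by ring,
          stripMap_odd, hAS]
        refine ⟨?_, ?_, ?_⟩ <;> simp only [Set.mem_setOf_eq] <;> push_cast <;> linarith
end

section
/- Let φ : ℝ² → ℝ² be the isometry (x,y) ↦ (y+1, x), and let B be the closed square with vertices (0,0), (1/2,-1/2), (1,0), (1/2,1/2). Then the images B^{φ^k} for k ∈ ℤ have pairwise disjoint interiors and their union is the closed strip Ω = {(x,y) : x ≥ y ≥ x-1}. Consequently, the triangle with vertices (0,0),(1,0),(1,1) and the square B are equidissectable using two pieces. -/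
/-- The `k`-th translate of the square, described by linear inequalities. -/
def Bset (k : ℤ) : Set (ℝ × ℝ) :=
  {p | 0 ≤ p.1 - p.2 ∧ p.1 - p.2 ≤ 1 ∧ (k : ℝ) ≤ p.1 + p.2 ∧ p.1 + p.2 ≤ (k : ℝ) + 1}

/-- The triangle, described by linear inequalities. -/
def Aset : Set (ℝ × ℝ) := {p | 0 ≤ p.2 ∧ p.2 ≤ p.1 ∧ p.1 ≤ 1}

lemma stripMap_symm_apply (p : ℝ × ℝ) : stripMap.symm p = (p.2, p.1 - 1) := rfl

lemma map_Bset (k : ℤ) : stripMap '' Bset k = Bset (k + 1) := by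
  rw [Equiv.image_eq_preimage_symm]
  ext p
  simp only [Set.mem_preimage, Bset, Set.mem_setOf_eq, stripMap_symm_apply]
  push_cast
  constructor <;> rintro ⟨h1, h2, h3, h4⟩ <;>
    exact ⟨by linarith, by linarith, by linarith, by linarith⟩

lemma map_symm_Bset (k : ℤ) : stripMap.symm '' Bset k = Bset (k - 1) := by
  have := map_Bset (k - 1)
  rw [sub_add_cancel] at this
  rw [← this, Equiv.symm_image_image]

lemma zpow_Bset : ∀ k : ℤ, (stripMap ^ k) '' Bset 0 = Bset k := by
  intro k
  induction k using Int.induction_on with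
  | zero => simp
  | succ n ih =>
      have h : (stripMap ^ ((n : ℤ) + 1)) = stripMap * stripMap ^ (n : ℤ) := by
        rw [add_comm, zpow_one_add]
      rw [h, Equiv.Perm.coe_mul, Set.image_comp, ih, map_Bset]
  | pred n ih =>
      have h : (stripMap ^ (-(n : ℤ) - 1)) = stripMap⁻¹ * stripMap ^ (-(n : ℤ)) := by
        rw [sub_eq_add_neg, add_comm, zpow_add, zpow_neg_one]
      rw [h, Equiv.Perm.coe_mul, Set.image_comp, ih,
        show ⇑(stripMap⁻¹ : Equiv.Perm (ℝ×ℝ)) = ⇑stripMap.symm from rfl, map_symm_Bset]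

lemma convex_Bset (k : ℤ) : Convex ℝ (Bset k) := by
  rintro x ⟨hx1, hx2, hx3, hx4⟩ y ⟨hy1, hy2, hy3, hy4⟩ a b ha hb hab
  simp only [Bset, Set.mem_setOf_eq, Prod.fst_add, Prod.snd_add, Prod.smul_fst, Prod.smul_snd,
    smul_eq_mul]
  have hk : a*(k:ℝ) + b*(k:ℝ) = (k:ℝ) := by rw [← add_mul, hab, one_mul]
  have hk1 : a*((k:ℝ)+1) + b*((k:ℝ)+1) = (k:ℝ)+1 := by rw [← add_mul, hab, one_mul]
  refine ⟨?_, ?_, ?_, ?_⟩ <;> nlinarith [mul_nonneg ha hx1, mul_nonneg hb hy1,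
    mul_le_mul_of_nonneg_left hx2 ha, mul_le_mul_of_nonneg_left hy2 hb,
    mul_le_mul_of_nonneg_left hx3 ha, mul_le_mul_of_nonneg_left hy3 hb,
    mul_le_mul_of_nonneg_left hx4 ha, mul_le_mul_of_nonneg_left hy4 hb]

lemma convex_Aset : Convex ℝ Aset := by
  rintro x ⟨hx1, hx2, hx3⟩ y ⟨hy1, hy2, hy3⟩ a b ha hb hab
  simp only [Aset, Set.mem_setOf_eq, Prod.fst_add, Prod.snd_add, Prod.smul_fst, Prod.smul_snd,
    smul_eq_mul]
  refine ⟨?_, ?_, ?_⟩ <;> nlinarith [mul_nonneg ha hx1, mul_nonneg hb hy1,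
    mul_le_mul_of_nonneg_left hx2 ha, mul_le_mul_of_nonneg_left hy2 hb,
    mul_le_mul_of_nonneg_left hx3 ha, mul_le_mul_of_nonneg_left hy3 hb]

lemma hullB : convexHull ℝ {((0:ℝ),(0:ℝ)), (1/2,-(1/2)), (1,0), (1/2,1/2)} = Bset 0 := by
  apply le_antisymm
  · apply convexHull_min _ (convex_Bset 0)
    rintro p (rfl | rfl | rfl | rfl) <;> simp [Bset] <;> norm_num
  · rintro p ⟨h1, h2, h3, h4⟩
    simp only [Int.cast_zero, zero_add] at h3 h4
    have hC := convex_convexHull ℝ ({((0:ℝ),(0:ℝ)), (1/2,-(1/2)), (1,0), (1/2,1/2)} : Set (ℝ×ℝ))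
    set d := p.1 - p.2 with hd
    set s := p.1 + p.2 with hs
    have m00 : ((0:ℝ),(0:ℝ)) ∈ convexHull ℝ ({((0:ℝ),(0:ℝ)), (1/2,-(1/2)), (1,0), (1/2,1/2)} : Set (ℝ×ℝ)) :=
      subset_convexHull ℝ _ (by simp)
    have m01 : ((1/2:ℝ),-(1/2:ℝ)) ∈ convexHull ℝ ({((0:ℝ),(0:ℝ)), (1/2,-(1/2)), (1,0), (1/2,1/2)} : Set (ℝ×ℝ)) :=
      subset_convexHull ℝ _ (by simp)
    have m10 : ((1/2:ℝ),(1/2:ℝ)) ∈ convexHull ℝ ({((0:ℝ),(0:ℝ)), (1/2,-(1/2)), (1,0), (1/2,1/2)} : Set (ℝ×ℝ)) :=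
      subset_convexHull ℝ _ (by simp)
    have m11 : ((1:ℝ),(0:ℝ)) ∈ convexHull ℝ ({((0:ℝ),(0:ℝ)), (1/2,-(1/2)), (1,0), (1/2,1/2)} : Set (ℝ×ℝ)) :=
      subset_convexHull ℝ _ (by simp)
    have q1mem := hC m00 m01 (by linarith : (0:ℝ) ≤ 1 - d) h1 (by ring)
    have q2mem := hC m10 m11 (by linarith : (0:ℝ) ≤ 1 - d) h1 (by ring)
    have pmem := hC q1mem q2mem (by linarith : (0:ℝ) ≤ 1 - s) h3 (by ring)
    have : (1 - s) • ((1 - d) • ((0:ℝ),(0:ℝ)) + d • ((1/2:ℝ),-(1/2:ℝ)))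
        + s • ((1 - d) • ((1/2:ℝ),(1/2:ℝ)) + d • ((1:ℝ),(0:ℝ))) = p := by
      apply Prod.ext <;> simp [Prod.smul_fst, Prod.smul_snd, hd, hs] <;> ring
    rwa [this] at pmem

lemma hullA : convexHull ℝ {((0:ℝ),(0:ℝ)), (1,0), (1,1)} = Aset := by
  apply le_antisymm
  · apply convexHull_min _ convex_Aset
    rintro p (rfl | rfl | rfl) <;> simp [Aset] <;> norm_num
  · rintro p ⟨h1, h2, h3⟩
    have hC := convex_convexHull ℝ ({((0:ℝ),(0:ℝ)), (1,0), (1,1)} : Set (ℝ×ℝ))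
    have m0 : ((0:ℝ),(0:ℝ)) ∈ convexHull ℝ ({((0:ℝ),(0:ℝ)), (1,0), (1,1)} : Set (ℝ×ℝ)) :=
      subset_convexHull ℝ _ (by simp)
    have m1 : ((1:ℝ),(0:ℝ)) ∈ convexHull ℝ ({((0:ℝ),(0:ℝ)), (1,0), (1,1)} : Set (ℝ×ℝ)) :=
      subset_convexHull ℝ _ (by simp)
    have m2 : ((1:ℝ),(1:ℝ)) ∈ convexHull ℝ ({((0:ℝ),(0:ℝ)), (1,0), (1,1)} : Set (ℝ×ℝ)) :=
      subset_convexHull ℝ _ (by simp)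
    rcases eq_or_lt_of_le (le_trans h1 h2) with hx | hx
    · have hy : p.2 = 0 := le_antisymm (by linarith [h2, hx.symm ▸ h2]) h1
      have : p = ((0:ℝ),(0:ℝ)) := Prod.ext hx.symm hy
      rw [this]; exact m0
    · have qmem := hC m1 m2 (by
        have := div_le_one_of_le₀ (by linarith : p.2 ≤ p.1) (le_of_lt hx)
        linarith : (0:ℝ) ≤ 1 - p.2 / p.1) (div_nonneg h1 (le_of_lt hx)) (by ring)
      have pmem := hC m0 qmem (by linarith : (0:ℝ) ≤ 1 - p.1) (by linarith : (0:ℝ) ≤ p.1) (by ring)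
      have : (1 - p.1) • ((0:ℝ),(0:ℝ)) + p.1 • ((1 - p.2/p.1) • ((1:ℝ),(0:ℝ)) + (p.2/p.1) • ((1:ℝ),(1:ℝ))) = p := by
        apply Prod.ext <;> simp [Prod.smul_fst, Prod.smul_snd] <;> field_simp
      rwa [this] at pmem

lemma interiorHalfspace {S : Set (ℝ × ℝ)} {a b c : ℝ}
    (hab : 0 < a ^ 2 + b ^ 2)
    (h : ∀ p ∈ S, a * p.1 + b * p.2 ≤ c) {p : ℝ × ℝ}
    (hp : p ∈ interior S) : a * p.1 + b * p.2 < c := by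
  rw [mem_interior_iff_mem_nhds, Metric.mem_nhds_iff] at hp
  obtain ⟨ε, hε, hball⟩ := hp
  set δ : ℝ := ε / (|a| + |b| + 1) with hδ
  have hden : (0:ℝ) < |a| + |b| + 1 := by positivity
  have hδpos : 0 < δ := div_pos hε hden
  have hq : (p.1 + δ * a, p.2 + δ * b) ∈ Metric.ball p ε := by
    rw [Metric.mem_ball, Prod.dist_eq]
    simp only [Real.dist_eq]
    have h1 : |p.1 + δ * a - p.1| = δ * |a| := by
      rw [add_sub_cancel_left, abs_mul, abs_of_pos hδpos]
    have h2 : |p.2 + δ * b - p.2| = δ * |b| := by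
      rw [add_sub_cancel_left, abs_mul, abs_of_pos hδpos]
    rw [h1, h2]
    have ha' : δ * |a| < ε := by
      rw [hδ, div_mul_eq_mul_div, div_lt_iff₀ hden]
      nlinarith [abs_nonneg a, abs_nonneg b]
    have hb' : δ * |b| < ε := by
      rw [hδ, div_mul_eq_mul_div, div_lt_iff₀ hden]
      nlinarith [abs_nonneg a, abs_nonneg b]
    exact max_lt ha' hb'
  have hle := h _ (hball hq)
  simp only at hle
  nlinarith [sq_abs a, sq_abs b]

lemma interior_Bset_strict {k : ℤ} {p : ℝ × ℝ} (hp : p ∈ interior (Bset k)) :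
    (k : ℝ) < p.1 + p.2 ∧ p.1 + p.2 < (k : ℝ) + 1 := by
  constructor
  · have := interiorHalfspace (a := -1) (b := -1) (c := -(k:ℝ)) (by norm_num)
      (fun q hq => by obtain ⟨_, _, h3, _⟩ := hq; linarith) hp
    linarith
  · have := interiorHalfspace (a := 1) (b := 1) (c := (k:ℝ)+1) (by norm_num)
      (fun q hq => by obtain ⟨_, _, _, h4⟩ := hq; linarith) hp
    linarith

theorem square_tiles_strip_and_two_piece_dissection
    (A B : Set (ℝ × ℝ))
    (hA : A = convexHull ℝ {((0 : ℝ), (0 : ℝ)), (1, 0), (1, 1)})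
    (hB : B = convexHull ℝ {((0 : ℝ), (0 : ℝ)), (1 / 2, -(1 / 2)), (1, 0), (1 / 2, 1 / 2)}) :
    (∀ j k : ℤ, j ≠ k →
      Disjoint (interior ((stripMap ^ j) '' B)) (interior ((stripMap ^ k) '' B))) ∧
    (⋃ k : ℤ, (stripMap ^ k) '' B) = {p : ℝ × ℝ | p.1 ≥ p.2 ∧ p.2 ≥ p.1 - 1} ∧
    ∃ j₁ j₂ : ℤ, j₁ ≠ j₂ ∧
      A = (A ∩ (stripMap ^ j₁) '' B) ∪ (A ∩ (stripMap ^ j₂) '' B) ∧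
      Disjoint (interior (A ∩ (stripMap ^ j₁) '' B)) (interior (A ∩ (stripMap ^ j₂) '' B)) ∧
      B = ((stripMap ^ (-j₁)) '' (A ∩ (stripMap ^ j₁) '' B)) ∪
          ((stripMap ^ (-j₂)) '' (A ∩ (stripMap ^ j₂) '' B)) ∧
      Disjoint (interior ((stripMap ^ (-j₁)) '' (A ∩ (stripMap ^ j₁) '' B)))
        (interior ((stripMap ^ (-j₂)) '' (A ∩ (stripMap ^ j₂) '' B))) := by
  have hBeq : B = Bset 0 := by rw [hB, hullB]
  have hAeq : A = Aset := by rw [hA, hullA]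
  have himg : ∀ k : ℤ, (stripMap ^ k) '' B = Bset k := fun k => by rw [hBeq, zpow_Bset]
  refine ⟨?_, ?_, ?_⟩
  · intro j k hjk
    rw [himg j, himg k, Set.disjoint_left]
    intro p hpj hpk
    obtain ⟨hj1, hj2⟩ := interior_Bset_strict hpj
    obtain ⟨hk1, hk2⟩ := interior_Bset_strict hpk
    apply hjk
    have h1 : (j:ℝ) < (k:ℝ) + 1 := by linarith
    have h2 : (k:ℝ) < (j:ℝ) + 1 := by linarith
    have h1' : j < k + 1 := by exact_mod_cast (by push_cast; linarith : (j:ℝ) < ((k+1:ℤ):ℝ))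
    have h2' : k < j + 1 := by exact_mod_cast (by push_cast; linarith : (k:ℝ) < ((j+1:ℤ):ℝ))
    omega
  · ext p
    simp only [Set.mem_iUnion, Set.mem_setOf_eq]
    constructor
    · rintro ⟨k, hk⟩
      rw [himg k] at hk
      obtain ⟨h1, h2, _, _⟩ := hk
      exact ⟨by linarith, by linarith⟩
    · rintro ⟨h1, h2⟩
      refine ⟨⌊p.1 + p.2⌋, ?_⟩
      rw [himg]
      exact ⟨by linarith, by linarith, Int.floor_le _, (Int.lt_floor_add_one _).le⟩
  · refine ⟨0, 1, by norm_num, ?_, ?_, ?_, ?_⟩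
    · rw [himg 0, himg 1, hAeq]
      ext p
      constructor
      · intro hp
        obtain ⟨h1, h2, h3⟩ := hp
        rcases le_total (p.1 + p.2) 1 with h | h
        · exact Or.inl ⟨⟨h1, h2, h3⟩, by
            simp only [Bset, Set.mem_setOf_eq]; push_cast
            exact ⟨by linarith, by linarith, by linarith, by linarith⟩⟩
        · exact Or.inr ⟨⟨h1, h2, h3⟩, by
            simp only [Bset, Set.mem_setOf_eq]; push_cast
            exact ⟨by linarith, by linarith, by linarith, by linarith⟩⟩
      · rintro (⟨h, _⟩ | ⟨h, _⟩) <;> exact h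
    · rw [himg 0, himg 1, hAeq, Set.disjoint_left]
      intro p hp0 hp1
      have h0 := interior_Bset_strict (interior_mono Set.inter_subset_right hp0)
      have h1 := interior_Bset_strict (interior_mono Set.inter_subset_right hp1)
      push_cast at h0 h1
      linarith [h0.2, h1.1]
    · rw [himg 0, himg 1, hAeq, hBeq, neg_zero, zpow_zero,
        show ⇑(1 : Equiv.Perm (ℝ×ℝ)) = id from rfl, Set.image_id,
        show ((-1 : ℤ)) = -1 from rfl, zpow_neg_one,
        show ⇑(stripMap⁻¹ : Equiv.Perm (ℝ×ℝ)) = ⇑stripMap.symm from rfl]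
      ext p
      constructor
      · intro hp
        obtain ⟨h1, h2, h3, h4⟩ := hp
        simp only [Int.cast_zero, zero_add] at h3 h4
        rcases le_total 0 p.2 with h | h
        · exact Or.inl ⟨⟨h, by linarith, by linarith⟩, h1, h2, by push_cast; linarith, by push_cast; linarith⟩
        · refine Or.inr ⟨stripMap p, ⟨?_, ?_⟩, Equiv.symm_apply_apply _ _⟩
          · exact ⟨by simp [stripMap_apply]; linarith, by simp [stripMap_apply]; linarith,
              by simp [stripMap_apply]; linarith⟩
          · simp only [Bset, Set.mem_setOf_eq, stripMap_apply]; push_cast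
            exact ⟨by linarith, by linarith, by linarith, by linarith⟩
      · rintro (⟨_, hb⟩ | ⟨q, ⟨_, hq⟩, rfl⟩)
        · exact hb
        · have h := map_symm_Bset 1
          norm_num at h
          rw [← h]
          exact ⟨q, hq, rfl⟩
    · rw [himg 0, himg 1, hAeq, neg_zero, zpow_zero,
        show ⇑(1 : Equiv.Perm (ℝ×ℝ)) = id from rfl, Set.image_id,
        show ((-1 : ℤ)) = -1 from rfl, zpow_neg_one,
        show ⇑(stripMap⁻¹ : Equiv.Perm (ℝ×ℝ)) = ⇑stripMap.symm from rfl, Set.disjoint_left]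
      intro p hp0 hp1
      have hpos : 0 * p.1 + (-1) * p.2 < 0 :=
        interiorHalfspace (by norm_num)
          (fun q hq => by obtain ⟨⟨h, _, _⟩, _⟩ := hq; linarith) hp0
      have hneg : 0 * p.1 + 1 * p.2 < 0 :=
        interiorHalfspace (by norm_num)
          (fun q hq => by
            obtain ⟨r, ⟨⟨_, _, hr3⟩, _⟩, rfl⟩ := hq
            simp only [stripMap_symm_apply]
            linarith) hp1
      linarith
end

section
/- With n, w, a, b, φ as above, define u_0 = 0 and u_i = φ^i(u_0) for i ∈ ℤ. Then for every i, the simplex Q^{(i)} := conv{u_i, u_{i+1}, …, u_{i+n}} is congruent to Q_n(w); in particular φ maps Q^{(i)} onto Q^{(i+1)}. -/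
theorem schobi_translates_congruent
    (n : ℕ) (hn : 2 ≤ n) (w : ℝ) (hw1 : -1 < w) (hw2 : w < 1 / ((n : ℝ) - 1))
    (b a : ℝ)
    (hb : b = (Real.sqrt (1 - w * ((n : ℝ) - 1)) - Real.sqrt (1 + w)) / n)
    (ha : a = b + Real.sqrt (1 + w))
    (e : EuclideanSpace ℝ (Fin n) ≃ᵢ EuclideanSpace ℝ (Fin n))
    (he : ∀ (x : EuclideanSpace ℝ (Fin n)) (i : Fin n),
      e x i =
        if h : (i : ℕ) = 0 then x ⟨n - 1, by omega⟩ + a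
        else x ⟨(i : ℕ) - 1, by omega⟩ + b)
    (u : ℤ → EuclideanSpace ℝ (Fin n))
    (hu : ∀ k : ℤ, u k = (e ^ k) 0)
    (v : Fin n → Fin n → ℝ)
    (hv : ∀ i j, v i j = if i = j then a else b)
    (Q : Set (EuclideanSpace ℝ (Fin n)))
    (hQ : Q = convexHull ℝ (insert (0 : EuclideanSpace ℝ (Fin n))
      (Set.range (fun i : Fin n =>
        (WithLp.toLp 2 (fun j => ∑ k ∈ Finset.Iic i, v k j) : EuclideanSpace ℝ (Fin n)))))) :
    ∀ i : ℤ,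
      (∃ f : EuclideanSpace ℝ (Fin n) ≃ᵢ EuclideanSpace ℝ (Fin n),
        f '' Q = convexHull ℝ (Set.range (fun j : Fin (n + 1) => u (i + (j : ℕ))))) ∧
      e '' convexHull ℝ (Set.range (fun j : Fin (n + 1) => u (i + (j : ℕ)))) =
        convexHull ℝ (Set.range (fun j : Fin (n + 1) => u (i + 1 + (j : ℕ)))) := by
  have hmap : ∀ (k j : ℤ), (e ^ k) (u j) = u (k + j) := by
    intro k j
    rw [hu, hu, ← IsometryEquiv.mul_apply, ← zpow_add]
  have himg : ∀ (f : EuclideanSpace ℝ (Fin n) ≃ᵢ EuclideanSpace ℝ (Fin n))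
      (s : Set (EuclideanSpace ℝ (Fin n))),
      f '' convexHull ℝ s = convexHull ℝ (f '' s) := by
    intro f s
    have h := AffineMap.image_convexHull
      (f.toRealAffineIsometryEquiv.toAffineEquiv.toAffineMap) s
    simpa [IsometryEquiv.coeFn_toRealAffineIsometryEquiv] using h
  have key : ∀ m : ℕ, m ≤ n → ∀ j : Fin n,
      (e ^ (m : ℤ)) 0 j = if (j : ℕ) < m then a + ((m : ℝ) - 1) * b else (m : ℝ) * b := by
    intro m
    induction m with
    | zero => intro _ j; simp
    | succ m ih =>
      intro hm j
      have h1 : (e ^ ((m : ℕ) + 1 : ℤ)) 0 = e ((e ^ (m : ℤ)) 0) := by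
        rw [add_comm, zpow_one_add, IsometryEquiv.mul_apply]
      have hcast : ((m + 1 : ℕ) : ℤ) = (m : ℤ) + 1 := by push_cast; ring
      have hih := ih (by omega)
      rw [hcast, h1, he]
      by_cases h0 : (j : ℕ) = 0
      · rw [dif_pos h0, hih, if_neg (show ¬ (n - 1) < m by omega),
          if_pos (show (j : ℕ) < m + 1 by omega)]
        push_cast; ring
      · rw [dif_neg h0, hih]
        by_cases hj : (j : ℕ) < m + 1
        · rw [if_pos (show (j : ℕ) - 1 < m by omega), if_pos hj]
          push_cast; ring
        · rw [if_neg (show ¬ (j : ℕ) - 1 < m by omega), if_neg hj]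
          push_cast; ring
  have hu0 : u 0 = 0 := by rw [hu]; simp
  have hS : ∀ i0 : Fin n,
      (WithLp.toLp 2 (fun j => ∑ k ∈ Finset.Iic i0, v k j) : EuclideanSpace ℝ (Fin n))
        = u ((i0 : ℕ) + 1) := by
    intro i0
    ext j
    rw [hu, show ((i0 : ℕ) : ℤ) + 1 = (((i0 : ℕ) + 1 : ℕ) : ℤ) by push_cast; ring,
      key ((i0 : ℕ) + 1) (by omega) j]
    have hsum : ∑ k ∈ Finset.Iic i0, v k j
        = (Finset.Iic i0).card * b + (if j ∈ Finset.Iic i0 then a - b else 0) := by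
      simp_rw [hv]
      rw [Finset.sum_congr rfl (fun k _ => show (if k = j then a else b)
        = b + (if k = j then a - b else 0) by split_ifs <;> ring)]
      rw [Finset.sum_add_distrib, Finset.sum_const, Finset.sum_ite_eq' (Finset.Iic i0) j
        (fun _ => a - b)]
      simp [mul_comm]
    show ∑ k ∈ Finset.Iic i0, v k j = _
    rw [hsum, Fin.card_Iic]
    by_cases hji : (j : ℕ) < (i0 : ℕ) + 1
    · rw [if_pos (Finset.mem_Iic.2 (Fin.le_def.2 (by omega))), if_pos hji]
      push_cast; ring
    · rw [if_neg (fun hmem => hji (by have := Fin.le_def.1 (Finset.mem_Iic.1 hmem); omega)),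
        if_neg hji]
      push_cast; ring
  have hvert : (insert (0 : EuclideanSpace ℝ (Fin n))
      (Set.range (fun i : Fin n =>
        (WithLp.toLp 2 (fun j => ∑ k ∈ Finset.Iic i, v k j) : EuclideanSpace ℝ (Fin n)))))
      = Set.range (fun j : Fin (n + 1) => u ((j : ℕ) : ℤ)) := by
    ext x
    simp only [Set.mem_insert_iff, Set.mem_range]
    constructor
    · rintro (rfl | ⟨i0, rfl⟩)
      · exact ⟨0, by simpa using hu0⟩
      · exact ⟨i0.succ, by rw [Fin.val_succ]; push_cast; exact (hS i0).symm⟩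
    · rintro ⟨j, rfl⟩
      induction j using Fin.cases with
      | zero => left; simpa using hu0
      | succ i0 => right; exact ⟨i0, by rw [hS, Fin.val_succ]; push_cast; ring_nf⟩
  have hQ' : Q = convexHull ℝ (Set.range (fun j : Fin (n + 1) => u ((j : ℕ) : ℤ))) := by
    rw [hQ, hvert]
  intro i
  constructor
  · refine ⟨e ^ i, ?_⟩
    rw [hQ', himg, ← Set.range_comp]
    have hfun : (⇑(e ^ i) ∘ fun j : Fin (n + 1) => u ((j : ℕ) : ℤ))
        = fun j : Fin (n + 1) => u (i + (j : ℕ)) := by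
      funext j
      exact hmap i ((j : ℕ) : ℤ)
    rw [hfun]
  · rw [himg, ← Set.range_comp]
    have hfun : (⇑e ∘ fun j : Fin (n + 1) => u (i + (j : ℕ)))
        = fun j : Fin (n + 1) => u (i + 1 + (j : ℕ)) := by
      funext j
      show e (u (i + (j : ℕ))) = u (i + 1 + (j : ℕ))
      have h2 : e (u (i + (j : ℕ))) = (e ^ (1 : ℤ)) (u (i + (j : ℕ))) := by rw [zpow_one]
      rw [h2, hmap]
      ring_nf
    rw [hfun]
end

section
/- For n ≥ 2, let P_n denote the simplex Q_n(1/n) (spanned by 0 and partial sums of n unit vectors with pairwise inner products -1/n). Let S be the n-dimensional simplex in ℝ^{n+1} with vertices 0 and the rows of √((n+1)/n) times the matrix whose k-th row (k = 1,…,n) has entries (n+1-k)/(n+1) in positions 1,…,k and -k/(n+1) in positions k+1,…,n+1. Then S is congruent to P_n. -/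
theorem An_coset_simplex_congruent_to_Pn
    (n : ℕ) (hn : 2 ≤ n)
    -- the standard realization of P_n = Q_n(1/n) in ℝⁿ
    (w b a : ℝ) (hw : w = 1 / (n : ℝ))
    (hb : b = (Real.sqrt (1 - w * ((n : ℝ) - 1)) - Real.sqrt (1 + w)) / n)
    (ha : a = b + Real.sqrt (1 + w))
    (v : Fin n → Fin n → ℝ)
    (hv : ∀ i j, v i j = if i = j then a else b)
    (P : Set (EuclideanSpace ℝ (Fin n)))
    (hP : P = convexHull ℝ (insert (0 : EuclideanSpace ℝ (Fin n))
      (Set.range (fun i : Fin n =>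
        (WithLp.toLp 2 (fun j => ∑ k ∈ Finset.Iic i, v k j) : EuclideanSpace ℝ (Fin n))))))
    -- the simplex S ⊂ ℝ^{n+1} spanned by 0 and the scaled coset representatives of Aₙ in Aₙ*
    (s : Fin n → EuclideanSpace ℝ (Fin (n + 1)))
    (hs : ∀ (k : Fin n) (j : Fin (n + 1)),
      s k j = Real.sqrt (((n : ℝ) + 1) / n) *
        (if (j : ℕ) ≤ (k : ℕ) then ((n : ℝ) - (k : ℕ)) / ((n : ℝ) + 1)
         else -(((k : ℕ) : ℝ) + 1) / ((n : ℝ) + 1)))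
    (S : Set (EuclideanSpace ℝ (Fin (n + 1))))
    (hS : S = convexHull ℝ (insert (0 : EuclideanSpace ℝ (Fin (n + 1))) (Set.range s))) :
    ∃ f : EuclideanSpace ℝ (Fin n) → EuclideanSpace ℝ (Fin (n + 1)),
      Isometry f ∧ f '' P = S := by
  have hn0 : (0:ℝ) < (n:ℝ) := by exact_mod_cast Nat.lt_of_lt_of_le Nat.zero_lt_two hn
  have hn0' : (n:ℝ) ≠ 0 := ne_of_gt hn0
  set r : ℝ := Real.sqrt n with hrdef
  set t : ℝ := Real.sqrt ((n:ℝ)+1) with htdef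
  have hr0 : 0 < r := Real.sqrt_pos.mpr hn0
  have ht0 : 0 < t := Real.sqrt_pos.mpr (by linarith)
  have hr : r^2 = (n:ℝ) := Real.sq_sqrt hn0.le
  have ht : t^2 = (n:ℝ)+1 := Real.sq_sqrt (by linarith)
  have hr0' : r ≠ 0 := ne_of_gt hr0
  have ht0' : t ≠ 0 := ne_of_gt ht0
  -- sqrt simplifications
  have hsq2 : Real.sqrt (1 + w) = t / r := by
    rw [hw, show (1 : ℝ) + 1/(n:ℝ) = ((n:ℝ)+1)/(n:ℝ) by field_simp,
      Real.sqrt_div (by linarith)]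
  have hsq1 : Real.sqrt (1 - w * ((n:ℝ) - 1)) = 1 / r := by
    rw [hw, show (1:ℝ) - 1/(n:ℝ) * ((n:ℝ)-1) = 1/(n:ℝ) by field_simp; ring,
      Real.sqrt_div (by norm_num), Real.sqrt_one]
  have hc : Real.sqrt (((n:ℝ) + 1) / n) = t / r := Real.sqrt_div (by linarith) _
  have hb' : b = (1 - t) / ((n:ℝ) * r) := by
    rw [hb, hsq1, hsq2]; field_simp
  have ha' : a = b + t / r := by rw [ha, hsq2]
  -- the linear isometry
  set β : ℝ := (1 - t) / ((n:ℝ) * t) with hβdef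
  set γ : ℝ := (1 - t) / (n:ℝ) with hγdef
  set F : EuclideanSpace ℝ (Fin n) →ₗ[ℝ] EuclideanSpace ℝ (Fin (n+1)) :=
    { toFun := fun x => WithLp.toLp 2 (fun j : Fin (n+1) => (if h : (j:ℕ) < n then x ⟨(j:ℕ), h⟩ else 0)
        + (β + if (j:ℕ) = n then γ else 0) * ∑ i, x i),
      map_add' := by
        intro x y
        ext j
        simp only [PiLp.toLp_apply, PiLp.add_apply, Finset.sum_add_distrib]
        split <;> ring
      map_smul' := by
        intro c x
        ext j
        simp only [PiLp.toLp_apply, PiLp.smul_apply, smul_eq_mul, RingHom.id_apply, ← Finset.mul_sum]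
        split <;> ring } with hFdef
  have hFapply : ∀ (x : EuclideanSpace ℝ (Fin n)) (j : Fin (n+1)),
      F x j = (if h : (j:ℕ) < n then x ⟨(j:ℕ), h⟩ else 0)
        + (β + if (j:ℕ) = n then γ else 0) * ∑ i, x i := fun _ _ => rfl
  -- the key scalar identity
  have key : 2*β + (n:ℝ)*β^2 + (β+γ)^2 = 0 := by
    rw [hβdef, hγdef]
    field_simp
    ring_nf
    linear_combination (t^2-1) * ht
  -- isometry
  have hnorm : ∀ x : EuclideanSpace ℝ (Fin n), ‖F x‖ = ‖x‖ := by
    intro x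
    rw [EuclideanSpace.norm_eq, EuclideanSpace.norm_eq]
    congr 1
    simp only [Real.norm_eq_abs, sq_abs, hFapply]
    rw [Fin.sum_univ_castSucc]
    have h1 : ∀ j : Fin n,
        ((if h : ((j.castSucc : Fin (n+1)):ℕ) < n then x ⟨((j.castSucc : Fin (n+1)):ℕ), h⟩ else 0)
          + (β + if ((j.castSucc : Fin (n+1)):ℕ) = n then γ else 0) * ∑ i, x i)^2
        = (x j)^2 + (2*β*(∑ i, x i)) * x j + β^2 * (∑ i, x i)^2 := by
      intro j
      rw [dif_pos (by simpa using j.isLt), if_neg (by simp; omega)]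
      simp only [Fin.coe_castSucc, Fin.eta]
      ring
    have h2 : ((if h : ((Fin.last n : Fin (n+1)):ℕ) < n then x ⟨((Fin.last n :
        Fin (n+1)):ℕ), h⟩ else 0)
          + (β + if ((Fin.last n : Fin (n+1)):ℕ) = n then γ else 0) * ∑ i, x i)^2
        = (β+γ)^2 * (∑ i, x i)^2 := by
      rw [dif_neg (by simp), if_pos (by simp)]
      ring
    rw [Finset.sum_congr rfl (fun j _ => h1 j), h2]
    rw [Finset.sum_add_distrib, Finset.sum_add_distrib, ← Finset.mul_sum,
      Finset.sum_const, Finset.card_univ, Fintype.card_fin, nsmul_eq_mul]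
    linear_combination (∑ i, x i)^2 * key
  -- coordinates of the vertices of P
  have hp : ∀ i j : Fin n, (∑ k ∈ Finset.Iic i, v k j)
      = if (j:ℕ) ≤ (i:ℕ) then a + ((i:ℕ):ℝ)*b else (((i:ℕ):ℝ)+1)*b := by
    intro i j
    have h1 : ∀ k, v k j = b + if k = j then a - b else 0 := by
      intro k; rw [hv]; split <;> ring
    simp_rw [h1]
    rw [Finset.sum_add_distrib, Finset.sum_const, Fin.card_Iic,
      Finset.sum_ite_eq' (Finset.Iic i) j (fun _ => a - b)]
    by_cases hji : (j:ℕ) ≤ (i:ℕ)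
    · rw [if_pos (Finset.mem_Iic.mpr (Fin.le_def.mpr hji)), if_pos hji, nsmul_eq_mul]
      push_cast; ring
    · rw [if_neg (fun h => hji (Fin.le_def.mp (Finset.mem_Iic.mp h))), if_neg hji,
        nsmul_eq_mul]
      push_cast; ring
  have hrow : ∀ k : Fin n, ∑ j, v k j = a + ((n:ℝ)-1)*b := by
    intro k
    have h1 : ∀ j, v k j = b + if k = j then a - b else 0 := by
      intro j; rw [hv]; split <;> ring
    simp_rw [h1]
    rw [Finset.sum_add_distrib, Finset.sum_const, Finset.card_univ, Fintype.card_fin,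
      Finset.sum_ite_eq Finset.univ k (fun _ => a - b), if_pos (Finset.mem_univ k),
      nsmul_eq_mul]
    ring
  have hT : ∀ i : Fin n, ∑ j, (∑ k ∈ Finset.Iic i, v k j)
      = (((i:ℕ):ℝ)+1) * (a + ((n:ℝ)-1)*b) := by
    intro i
    rw [Finset.sum_comm, Finset.sum_congr rfl (fun k _ => hrow k), Finset.sum_const,
      Fin.card_Iic, nsmul_eq_mul]
    push_cast; ring
  -- three scalar identities for the coordinates
  have L1 : ∀ m : ℝ, (a + m*b) + β * ((m+1) * (a + ((n:ℝ)-1)*b))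
      = (t/r) * (((n:ℝ) - m)/((n:ℝ)+1)) := by
    intro m
    rw [ha', hb', hβdef]
    field_simp
    ring_nf
    linear_combination (-((n:ℝ)*(m+1))) * ht
  have L2 : ∀ m : ℝ, (m+1)*b + β * ((m+1) * (a + ((n:ℝ)-1)*b))
      = (t/r) * (-(m+1)/((n:ℝ)+1)) := by
    intro m
    rw [ha', hb', hβdef]
    field_simp
    ring_nf
    linear_combination (-((n:ℝ)*(m+1))) * ht
  have L3 : ∀ m : ℝ, (β+γ) * ((m+1) * (a + ((n:ℝ)-1)*b))
      = (t/r) * (-(m+1)/((n:ℝ)+1)) := by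
    intro m
    rw [ha', hb', hβdef, hγdef]
    field_simp
    ring_nf
    linear_combination (-((n:ℝ)*(m+1))) * ht
  -- F maps the vertices of P to those of S
  have hvert : ∀ i : Fin n,
      F (WithLp.toLp 2 (fun j => ∑ k ∈ Finset.Iic i, v k j) : EuclideanSpace ℝ (Fin n)) = s i := by
    intro i
    ext j
    rw [hFapply, hs, hc]
    have hTi : (∑ l, (WithLp.toLp 2 (fun j => ∑ k ∈ Finset.Iic i, v k j) : EuclideanSpace ℝ (Fin n)) l)
        = (((i:ℕ):ℝ)+1) * (a + ((n:ℝ)-1)*b) := hT i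
    rw [hTi]
    by_cases hjn : (j:ℕ) < n
    · rw [dif_pos hjn, if_neg (by omega)]
      have hco : ((⟨(j:ℕ), hjn⟩ : Fin n) : ℕ) = (j:ℕ) := rfl
      show (∑ k ∈ Finset.Iic i, v k ⟨(j:ℕ), hjn⟩) + (β + 0) * _ = _
      rw [hp i ⟨(j:ℕ), hjn⟩, hco]
      by_cases hji : (j:ℕ) ≤ (i:ℕ)
      · rw [if_pos hji, if_pos hji, add_zero]
        exact L1 _
      · rw [if_neg hji, if_neg hji, add_zero]
        exact L2 _
    · have hje : (j:ℕ) = n := by omega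
      rw [dif_neg hjn, if_pos hje, if_neg (by omega), zero_add]
      exact L3 _
  refine ⟨F, AddMonoidHomClass.isometry_of_norm F hnorm, ?_⟩
  show ⇑F '' P = S
  have himg : (⇑F) '' (Set.range (fun i : Fin n =>
      (WithLp.toLp 2 (fun j => ∑ k ∈ Finset.Iic i, v k j) : EuclideanSpace ℝ (Fin n)))) = Set.range s := by
    rw [← Set.range_comp]
    exact congrArg Set.range (funext hvert)
  rw [hP, hS]
  refine (F.image_convexHull _).trans ?_
  rw [Set.image_insert_eq, map_zero, himg]
end
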